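/- Let K be a compact zerodimensional space, μ a Radon probability measure on K, f : K → 2^ω continuous. Suppose there exist clopen sets {A_α : α ∈ Λ}, Λ uncountable, a point t ∈ 2^ω, and N ∈ ω such that μ_{t|n}(A_α △ A_β) > 1/4 for all distinct α, β ∈ Λ and all n > N (where μ_σ is the conditional measure on f⁻¹[[σ]], assumed positive). Then any weak* accumulation point μ_t of {μ_{t|n} : n > N} is a non-separable measure concentrated on the fiber f⁻¹({t}). -/

import Mathlib

open MeasureTheory Set Filter Topology
open scoped NNReal ENNReal

/-- The basic clopen cylinder `[t|n]` in Cantor space. -/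
def Cyl (t : ℕ → Bool) (n : ℕ) : Set (ℕ → Bool) := {s | ∀ i < n, s i = t i}

/-- A measure is separable if some countable family of measurable sets approximates it
in the symmetric-difference pseudometric. -/
def MeasureSeparable {K : Type*} [MeasurableSpace K] (μ : Measure K) : Prop :=
  ∃ E : Set (Set K), E.Countable ∧ (∀ B ∈ E, MeasurableSet B) ∧
    ∀ A : Set K, MeasurableSet A → ∀ ε : ENNReal, 0 < ε → ∃ B ∈ E, μ (symmDiff A B) < ε

lemma cyl_isClopen (t : ℕ → Bool) (n : ℕ) : IsClopen (Cyl t n) := by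
  have h : Cyl t n = ⋂ i ∈ Finset.range n, (fun s : ℕ → Bool => s i) ⁻¹' {t i} := by
    ext x; simp [Cyl]
  rw [h]
  exact isClopen_biInter_finset fun i _ =>
    (isClopen_discrete {t i}).preimage (continuous_apply i)

lemma cyl_anti (t : ℕ → Bool) {m n : ℕ} (h : m ≤ n) : Cyl t n ⊆ Cyl t m :=
  fun s hs i hi => hs i (lt_of_lt_of_le hi h)

lemma iInter_cyl (t : ℕ → Bool) : (⋂ n, Cyl t n) = {t} := by
  ext s
  simp only [mem_iInter, mem_singleton_iff, Cyl, mem_setOf_eq]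
  constructor
  · intro h; funext i; exact h (i + 1) i (Nat.lt_succ_self i)
  · rintro rfl; exact fun _ i _ => rfl

lemma integral_indicator_eq {K : Type*} [TopologicalSpace K] [MeasurableSpace K]
    [OpensMeasurableSpace K] (ν : ProbabilityMeasure K) (C : Set K) (hC : IsClopen C) :
    ∫ x, (BoundedContinuousFunction.indicator C hC) x ∂(ν : Measure K) = (ν C : ℝ) := by
  have : ∀ x, (BoundedContinuousFunction.indicator C hC) x
      = C.indicator (fun _ => (1 : ℝ)) x := fun x => rfl
  simp_rw [this]
  rw [integral_indicator hC.isClosed.measurableSet, setIntegral_const, smul_eq_mul, mul_one, measureReal_def,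
    ← ν.ennreal_coeFn_eq_coeFn_toMeasure, ENNReal.coe_toReal]

theorem stmt19 {K : Type*} [TopologicalSpace K] [CompactSpace K] [T2Space K]
    [TotallyDisconnectedSpace K] [MeasurableSpace K] [BorelSpace K]
    (μ : Measure K) [IsProbabilityMeasure μ] [μ.Regular]
    (f : K → (ℕ → Bool)) (hf : Continuous f) (t : ℕ → Bool)
    -- the cylinders around `t` have positive measure:
    (hpos : ∀ n : ℕ, 0 < μ (f ⁻¹' Cyl t n))
    -- the conditional measures `μ_{t|n}` on `f⁻¹[[t|n]]`:
    (μs : ℕ → ProbabilityMeasure K)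
    (hμs : ∀ (n : ℕ) (A : Set K), MeasurableSet A →
      (μs n : Measure K) A = μ (A ∩ f ⁻¹' Cyl t n) / μ (f ⁻¹' Cyl t n))
    -- an uncountable family of clopen sets `1/4`-separated for all `μ_{t|n}`, `n > N`:
    {Λ : Type*} [Uncountable Λ] (A : Λ → Set K) (hA : ∀ α, IsClopen (A α)) (N : ℕ)
    (hsep : ∀ n > N, ∀ α β : Λ, α ≠ β →
      (1/4 : ENNReal) < (μs n : Measure K) (symmDiff (A α) (A β)))
    -- `μ_t` is a weak* accumulation point of `{μ_{t|n} : n > N}`: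
    (μt : ProbabilityMeasure K)
    (hacc : MapClusterPt μt (atTop ⊓ 𝓟 {n | N < n}) μs) :
    ¬ MeasureSeparable (μt : Measure K) ∧ (μt : Measure K) (f ⁻¹' {t}) = 1 := by
  set l : Filter ℕ := atTop ⊓ 𝓟 {n | N < n} with hl
  obtain ⟨U, hUl, hUt⟩ := mapClusterPt_iff_ultrafilter.mp hacc
  -- key: lower bounds along the net pass to the cluster point, for clopen sets
  have key : ∀ (C : Set K) (c : ℝ≥0), IsClopen C →
      (∀ᶠ n in l, c ≤ (μs n) C) → c ≤ μt C := by
    intro C c hC hev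
    have hint : Tendsto (fun n => ∫ x, (BoundedContinuousFunction.indicator C hC) x
        ∂(μs n : Measure K)) U
        (𝓝 (∫ x, (BoundedContinuousFunction.indicator C hC) x ∂(μt : Measure K))) :=
      (ProbabilityMeasure.tendsto_iff_forall_integral_tendsto.mp hUt) _
    have hint' : Tendsto (fun n => ((μs n) C : ℝ)) U (𝓝 ((μt C : ℝ))) := by
      simpa only [integral_indicator_eq] using hint
    have hevU : ∀ᶠ n in (U : Filter ℕ), c ≤ (μs n) C := hUl hev
    have hev' : ∀ᶠ n in (U : Filter ℕ), (c : ℝ) ≤ ((μs n) C : ℝ) :=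
      hevU.mono fun n hn => by exact_mod_cast hn
    exact_mod_cast ge_of_tendsto hint' hev'
  -- the separation passes to μt
  have hge : ∀ α β : Λ, α ≠ β → (1/4 : ℝ≥0) ≤ μt (symmDiff (A α) (A β)) := by
    intro α β hne
    have hC : IsClopen (symmDiff (A α) (A β)) := by
      rw [Set.symmDiff_def]
      exact ((hA α).diff (hA β)).union ((hA β).diff (hA α))
    refine key _ _ hC ?_
    rw [hl, eventually_inf_principal]
    refine Eventually.of_forall fun n hn => ?_
    have h := (hsep n hn α β hne).le
    rw [← (μs n).ennreal_coeFn_eq_coeFn_toMeasure] at h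
    have h4 : ((1/4 : ℝ≥0) : ℝ≥0∞) = (1/4 : ℝ≥0∞) := by norm_num
    exact_mod_cast h4 ▸ h
  constructor
  · -- non-separability
    rintro ⟨E, hEc, hEm, hEapprox⟩
    choose B hBE hBlt using fun α : Λ =>
      hEapprox (A α) (hA α).isClosed.measurableSet ((1:ℝ≥0∞)/8) (by norm_num)
    haveI : Countable E := hEc.to_subtype
    have hninj : ¬ Function.Injective (fun α : Λ => (⟨B α, hBE α⟩ : E)) := by
      intro hinj
      haveI := hinj.countable
      exact not_uncountable_iff.mpr ‹Countable Λ› ‹Uncountable Λ›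
    obtain ⟨α, β, hBeq, hne⟩ := Function.not_injective_iff.mp hninj
    have hBeq' : B α = B β := congrArg Subtype.val hBeq
    have htri : (μt : Measure K) (symmDiff (A α) (A β)) ≤
        (μt : Measure K) (symmDiff (A α) (B α)) +
          (μt : Measure K) (symmDiff (B α) (A β)) :=
      measure_symmDiff_le _ _ _
    have hlt : (μt : Measure K) (symmDiff (A α) (A β)) < 1/4 := by
      have h2 : (μt : Measure K) (symmDiff (B α) (A β)) < 1/8 := by
        rw [symmDiff_comm, hBeq']; exact hBlt β
      calc (μt : Measure K) (symmDiff (A α) (A β))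
          ≤ _ + _ := htri
        _ < 1/8 + 1/8 := by
            exact ENNReal.add_lt_add (hBlt α) h2
        _ = 1/4 := by rw [ENNReal.div_add_div_same, ENNReal.div_eq_div_iff] <;> norm_num
    have hge' : (1/4 : ℝ≥0∞) ≤ (μt : Measure K) (symmDiff (A α) (A β)) := by
      have := hge α β hne
      rw [← μt.ennreal_coeFn_eq_coeFn_toMeasure]
      have h4 : ((1/4 : ℝ≥0) : ℝ≥0∞) = (1/4 : ℝ≥0∞) := by norm_num
      exact h4 ▸ ENNReal.coe_le_coe.mpr this
    exact absurd hlt (not_lt.mpr hge')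
  · -- concentration on the fiber
    have hone : ∀ m : ℕ, (μt : Measure K) (f ⁻¹' Cyl t m) = 1 := by
      intro m
      have hC : IsClopen (f ⁻¹' Cyl t m) := (cyl_isClopen t m).preimage hf
      have h1 : (1 : ℝ≥0) ≤ μt (f ⁻¹' Cyl t m) := by
        refine key _ _ hC ?_
        have hev : ∀ᶠ n in atTop, m ≤ n := eventually_ge_atTop m
        refine ((hev.filter_mono inf_le_left).mono fun n hn => ?_)
        have hmeas : (μs n : Measure K) (f ⁻¹' Cyl t m) = 1 := by
          rw [hμs n _ hC.isClosed.measurableSet]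
          have hsub : f ⁻¹' Cyl t n ⊆ f ⁻¹' Cyl t m := preimage_mono (cyl_anti t hn)
          rw [Set.inter_eq_self_of_subset_right hsub]
          exact ENNReal.div_self (hpos n).ne' (measure_ne_top μ _)
        rw [← (μs n).ennreal_coeFn_eq_coeFn_toMeasure] at hmeas
        exact_mod_cast hmeas.ge
      have h2 : μt (f ⁻¹' Cyl t m) = 1 := le_antisymm (μt.apply_le_one _) h1
      rw [← μt.ennreal_coeFn_eq_coeFn_toMeasure, h2, ENNReal.coe_one]
    have hfib : f ⁻¹' {t} = ⋂ m, f ⁻¹' Cyl t m := by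
      rw [← preimage_iInter, iInter_cyl]
    rw [hfib, ← prob_compl_eq_zero_iff
      (MeasurableSet.iInter fun m => ((cyl_isClopen t m).preimage hf).isClosed.measurableSet),
      Set.compl_iInter]
    refine measure_iUnion_null fun m => ?_
    rw [measure_compl ((cyl_isClopen t m).preimage hf).isClosed.measurableSet (measure_ne_top _ _),
      hone m, measure_univ, tsub_self]
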